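/- Let 0 ≤ σ₀ < a < b ≤ σ̄, let E : [σ₀,σ̄] → ℝ be nonincreasing, concave on [a,b], and satisfy E(a) > E(b). Let σ_FM : [0,∞) → [σ₀,σ̄] be a Francfort–Marigo crack trajectory (i.e. it satisfies conditions (i), (ii), (iii)) with σ_FM(0) < a. Then σ_FM is not continuous on [0,∞). -/

import Mathlib

open Set

set_option maxHeartbeats 1000000 in
/-- Proposition 5.1: a Francfort–Marigo crack trajectory must be discontinuous if the
minimal energy has a concavity interval. -/
theorem francfort_marigo_discontinuous
    (σ₀ a b σmax : ℝ) (h0 : 0 ≤ σ₀) (h1 : σ₀ < a) (h2 : a < b) (h3 : b ≤ σmax)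
    (E : ℝ → ℝ)
    (hEmono : AntitoneOn E (Icc σ₀ σmax))
    (hEconc : ConcaveOn ℝ (Icc a b) E)
    (hEab : E b < E a)
    (σFM : ℝ → ℝ)
    (hmap : ∀ t, 0 ≤ t → σFM t ∈ Icc σ₀ σmax)
    (hi : MonotoneOn σFM (Ici 0))
    (hii : ∀ t, 0 ≤ t → ∀ σ ∈ Icc σ₀ σmax, σFM t ≤ σ →
      t ^ 2 * E (σFM t) + σFM t ≤ t ^ 2 * E σ + σ)
    (hiii : ∀ s t : ℝ, 0 ≤ s → s ≤ t →
      t ^ 2 * E (σFM t) + σFM t ≤ t ^ 2 * E (σFM s) + σFM s)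
    (hinit : σFM 0 < a) :
    ¬ ContinuousOn σFM (Ici 0) := by
  intro hcont
  have hba : (0:ℝ) < b - a := by linarith
  have hk : (0:ℝ) < E a - E b := by linarith
  -- concavity in chord form
  have hconc' : ∀ c, a ≤ c → c ≤ b → (b-c) * E a + (c-a) * E b ≤ (b-a) * E c := by
    intro c hac hcb
    have hne : b - a ≠ 0 := ne_of_gt hba
    have hp : (0:ℝ) ≤ (b-c)/(b-a) := div_nonneg (by linarith) hba.le
    have hq : (0:ℝ) ≤ (c-a)/(b-a) := div_nonneg (by linarith) hba.le
    have hpq : (b-c)/(b-a) + (c-a)/(b-a) = 1 := by field_simp; ring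
    have hkey := hEconc.2 (Set.left_mem_Icc.mpr h2.le) (Set.right_mem_Icc.mpr h2.le) hp hq hpq
    simp only [smul_eq_mul] at hkey
    have hxy : (b-c)/(b-a) * a + (c-a)/(b-a) * b = c := by field_simp; ring
    rw [hxy] at hkey
    rw [div_mul_eq_mul_div, div_mul_eq_mul_div, ← add_div, div_le_iff₀ hba] at hkey
    linarith [hkey]
  obtain ⟨c₁, c₂, hac₁, hc₁c₂, hc₂b, heq1, heq2⟩ :
      ∃ c₁ c₂ : ℝ, a < c₁ ∧ c₁ < c₂ ∧ c₂ < b ∧ 3*(c₁ - a) = b - a ∧ 3*(b - c₂) = b - a :=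
    ⟨(2*a+b)/3, (a+2*b)/3, by linarith, by linarith, by linarith, by ring, by ring⟩
  have hc₂mem : c₂ ∈ Icc σ₀ σmax := ⟨by linarith, by linarith⟩
  have hbmem : b ∈ Icc σ₀ σmax := ⟨by linarith, h3⟩
  -- choose a large time T with σFM T > c₂
  have hP : (0:ℝ) < (b - c₂) * (E a - E b) := mul_pos (by linarith) hk
  obtain ⟨T, hT0, hTP⟩ : ∃ T : ℝ, 0 ≤ T ∧
      (b - σ₀) * (b - a) < T ^ 2 * ((b - c₂) * (E a - E b)) := by
    set Q : ℝ := (b - σ₀) * (b - a) with hQdef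
    have hQnonneg : (0:ℝ) ≤ Q / ((b - c₂) * (E a - E b)) := by
      apply div_nonneg _ hP.le
      rw [hQdef]; nlinarith
    refine ⟨Real.sqrt (Q / ((b - c₂) * (E a - E b))) + 1, by positivity, ?_⟩
    have hT2 : Q / ((b - c₂) * (E a - E b)) <
        (Real.sqrt (Q / ((b - c₂) * (E a - E b))) + 1) ^ 2 := by
      nlinarith [Real.sq_sqrt hQnonneg, Real.sqrt_nonneg (Q / ((b - c₂) * (E a - E b)))]
    exact (div_lt_iff₀ hP).mp hT2
  have hσT : c₂ < σFM T := by
    by_contra hle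
    push_neg at hle
    have hmemT := hmap T hT0
    have hE1 : E c₂ ≤ E (σFM T) := hEmono hmemT hc₂mem hle
    have h2' := hii T hT0 b hbmem (by linarith)
    have hc := hconc' c₂ (by linarith) hc₂b.le
    nlinarith [mul_le_mul_of_nonneg_left hc (sq_nonneg T),
      mul_le_mul_of_nonneg_left h2' hba.le,
      mul_le_mul_of_nonneg_left hE1 (sq_nonneg T), hmemT.1, sq_nonneg T]
  -- intermediate value theorem
  have hIV : Icc (σFM 0) (σFM T) ⊆ σFM '' Icc 0 T :=
    intermediate_value_Icc hT0 (hcont.mono (Icc_subset_Ici_self))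
  obtain ⟨ta, htamem, hta⟩ := hIV (show a ∈ Icc (σFM 0) (σFM T) from ⟨hinit.le, by linarith⟩)
  obtain ⟨t1, ht1mem, ht1⟩ := hIV (show c₁ ∈ Icc (σFM 0) (σFM T) from ⟨by linarith, by linarith⟩)
  obtain ⟨t2, ht2mem, ht2⟩ := hIV (show c₂ ∈ Icc (σFM 0) (σFM T) from ⟨by linarith, by linarith⟩)
  have hta0 : (0:ℝ) ≤ ta := htamem.1
  have ht10 : (0:ℝ) ≤ t1 := ht1mem.1
  have ht20 : (0:ℝ) ≤ t2 := ht2mem.1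
  have htat1 : ta ≤ t1 := by
    by_contra hlt
    push_neg at hlt
    have := hi ht1mem.1 htamem.1 hlt.le
    rw [hta, ht1] at this; linarith
  have ht1t2 : t1 < t2 := by
    by_contra hlt
    push_neg at hlt
    have := hi ht2mem.1 ht1mem.1 hlt
    rw [ht1, ht2] at this; linarith
  -- lower bound on t1
  have key1 := hiii ta t1 hta0 htat1
  rw [hta, ht1] at key1
  have hc1 := hconc' c₁ hac₁.le (by linarith)
  have h2c1 : (b - a) * (E a - E c₁) ≤ (c₁ - a) * (E a - E b) := by nlinarith [hc1]
  have hlow : b - a ≤ t1 ^ 2 * (E a - E b) := by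
    have h1' : c₁ - a ≤ t1 ^ 2 * (E a - E c₁) := by linarith
    have h4 : (b - a) * (c₁ - a) ≤ t1 ^ 2 * ((c₁ - a) * (E a - E b)) := by
      nlinarith [mul_le_mul_of_nonneg_left h2c1 (sq_nonneg t1), h1', hba]
    have hca : (0:ℝ) < c₁ - a := by linarith
    have h5 : (c₁ - a) * (b - a) ≤ (c₁ - a) * (t1 ^ 2 * (E a - E b)) := by
      ring_nf; ring_nf at h4; linarith
    exact le_of_mul_le_mul_left h5 hca
  -- upper bound on t2
  have key2 := hii t2 ht20 b hbmem (by rw [ht2]; linarith)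
  rw [ht2] at key2
  have hc2 := hconc' c₂ (by linarith) hc₂b.le
  have h2c2 : (b - c₂) * (E a - E b) ≤ (b - a) * (E c₂ - E b) := by nlinarith [hc2]
  have hup : t2 ^ 2 * (E a - E b) ≤ b - a := by
    have h1' : t2 ^ 2 * (E c₂ - E b) ≤ b - c₂ := by linarith
    have h4 : t2 ^ 2 * ((b - c₂) * (E a - E b)) ≤ (b - a) * (b - c₂) := by
      nlinarith [mul_le_mul_of_nonneg_left h2c2 (sq_nonneg t2), h1', hba]
    have hcb : (0:ℝ) < b - c₂ := by linarith
    have h5 : (b - c₂) * (t2 ^ 2 * (E a - E b)) ≤ (b - c₂) * (b - a) := by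
      ring_nf; ring_nf at h4; linarith
    exact le_of_mul_le_mul_left h5 hcb
  -- contradiction: t1 < t2 but t2^2 ≤ t1^2
  have hsq : t1 ^ 2 < t2 ^ 2 := by nlinarith [ht1t2, ht10]
  have hfin := mul_lt_mul_of_pos_right hsq hk
  linarith
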